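/- arXiv:2210.09339 — 3 statements merged into one kernel-verified Lean document; each statement's English description precedes it below -/
import Mathlib

section
/- Let p ≥ 1, λ > 0, ϑ > 0, and γ > 1 + 1/ϑ, and let p_γ(t, λ) = λ ∫₀^{|t|} min{1, (γ − x/λ)₊/(γ − 1)} dx be the SCAD penalty. For κ ∈ ℝ^p, define ζ* ∈ ℝ^p by: ζ* = S(κ, λ/ϑ) if ‖κ‖ ≤ λ + λ/ϑ; ζ* = {1 − 1/((γ − 1)ϑ)}⁻¹ S(κ, γλ/((γ − 1)ϑ)) if λ + λ/ϑ < ‖κ‖ ≤ γλ; and ζ* = κ if ‖κ‖ > γλ; where S(w, t) = (1 − t/‖w‖)₊ w (with S(0, t) = 0) and ‖·‖ is the Euclidean norm. Then ζ* is a global minimizer of the function ζ ↦ (ϑ/2)‖κ − ζ‖² + p_γ(‖ζ‖, λ) on ℝ^p. -/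
/-- The SCAD penalty `p_γ(t, λ) = λ ∫₀^{|t|} min{1, (γ − x/λ)₊/(γ − 1)} dx`. -/
noncomputable def scadPenalty (γ lam t : ℝ) : ℝ :=
  lam * ∫ x in (0 : ℝ)..|t|, min 1 (max (γ - x / lam) 0 / (γ - 1))

/-- The groupwise soft-thresholding operator `S(w, t) = (1 − t/‖w‖)₊ w` (with `S(0, t) = 0`,
since in Lean `t / 0 = 0` and the scalar multiplies `0`). -/
noncomputable def softThreshold {p : ℕ} (w : EuclideanSpace ℝ (Fin p)) (t : ℝ) :
    EuclideanSpace ℝ (Fin p) :=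
  max (1 - t / ‖w‖) 0 • w

/-- The three-case closed form of the SCAD proximal map in the ADMM `ζ`-update. -/
noncomputable def scadProx {p : ℕ} (γ lam ϑ : ℝ) (κ : EuclideanSpace ℝ (Fin p)) :
    EuclideanSpace ℝ (Fin p) :=
  if ‖κ‖ ≤ lam + lam / ϑ then softThreshold κ (lam / ϑ)
  else if ‖κ‖ ≤ γ * lam then
    (1 - 1 / ((γ - 1) * ϑ))⁻¹ • softThreshold κ (γ * lam / ((γ - 1) * ϑ))
  else κ

/-- closed form of the penalty -/
noncomputable def Pfun (γ lam t : ℝ) : ℝ :=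
  if t ≤ lam then lam * t
  else if t ≤ γ * lam then (2*γ*lam*t - t^2 - lam^2) / (2*(γ-1))
  else lam^2 * (γ+1) / 2

lemma integrand_intble (γ lam s t : ℝ) :
    IntervalIntegrable (fun x : ℝ => min 1 (max (γ - x / lam) 0 / (γ - 1)))
      MeasureTheory.volume s t := by
  apply Continuous.intervalIntegrable; fun_prop

lemma int1 (γ lam s t : ℝ) (hγ : 1 < γ) (hlam : 0 < lam) (hst : s ≤ t) (h0 : 0 ≤ s)
    (h1 : t ≤ lam) :
    ∫ x in s..t, min 1 (max (γ - x / lam) 0 / (γ - 1)) = t - s := by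
  rw [intervalIntegral.integral_congr (g := fun _ => (1:ℝ))]
  · simp
  · intro x hx
    rw [Set.uIcc_of_le hst] at hx
    obtain ⟨hx0, hxt⟩ := hx
    have hxl : x / lam ≤ 1 := by rw [div_le_one hlam]; linarith
    have hmax : max (γ - x / lam) 0 = γ - x / lam := max_eq_left (by linarith)
    show min 1 _ = 1
    rw [hmax, min_eq_left]
    rw [le_div_iff₀ (by linarith)]; linarith

lemma int2 (γ lam s t : ℝ) (hγ : 1 < γ) (hlam : 0 < lam) (hst : s ≤ t) (h0 : lam ≤ s)
    (h1 : t ≤ γ * lam) :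
    ∫ x in s..t, min 1 (max (γ - x / lam) 0 / (γ - 1))
      = (γ*(t-s) - (t^2-s^2)/(2*lam))/(γ-1) := by
  rw [intervalIntegral.integral_congr (g := fun x => (γ - x / lam)/(γ-1))]
  · rw [intervalIntegral.integral_div, intervalIntegral.integral_sub
      intervalIntegrable_const (by apply Continuous.intervalIntegrable; fun_prop),
      intervalIntegral.integral_const, intervalIntegral.integral_div, integral_id]
    simp only [smul_eq_mul]
    ring
  · intro x hx
    rw [Set.uIcc_of_le hst] at hx
    obtain ⟨hx0, hxt⟩ := hx
    have hxg : x / lam ≤ γ := by rw [div_le_iff₀ hlam]; nlinarith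
    have hxl : 1 ≤ x / lam := by rw [le_div_iff₀ hlam]; linarith
    have hmax : max (γ - x / lam) 0 = γ - x / lam := max_eq_left (by linarith)
    show min 1 _ = _
    rw [hmax, min_eq_right]
    rw [div_le_one (by linarith)]; linarith

lemma int3 (γ lam s t : ℝ) (hγ : 1 < γ) (hlam : 0 < lam) (hst : s ≤ t) (h0 : γ * lam ≤ s) :
    ∫ x in s..t, min 1 (max (γ - x / lam) 0 / (γ - 1)) = 0 := by
  rw [intervalIntegral.integral_congr (g := fun _ => (0:ℝ))]
  · simp
  · intro x hx
    rw [Set.uIcc_of_le hst] at hx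
    obtain ⟨hx0, hxt⟩ := hx
    have : γ ≤ x / lam := by rw [le_div_iff₀ hlam]; nlinarith
    have hmax : max (γ - x / lam) 0 = 0 := max_eq_right (by linarith)
    show min 1 _ = 0
    rw [hmax, zero_div]; simp

lemma scadPenalty_eq (γ lam t : ℝ) (hγ : 1 < γ) (hlam : 0 < lam) (ht : 0 ≤ t) :
    scadPenalty γ lam t = Pfun γ lam t := by
  have habs : |t| = t := abs_of_nonneg ht
  have hγ0 : γ - 1 ≠ 0 := by linarith
  have hlam0 : lam ≠ 0 := ne_of_gt hlam
  unfold scadPenalty Pfun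
  rw [habs]
  split_ifs with h1 h2
  · rw [int1 γ lam 0 t hγ hlam ht le_rfl h1]; ring
  · push_neg at h1
    rw [← intervalIntegral.integral_add_adjacent_intervals (b := lam)
      (integrand_intble γ lam 0 lam) (integrand_intble γ lam lam t),
      int1 γ lam 0 lam hγ hlam hlam.le le_rfl le_rfl,
      int2 γ lam lam t hγ hlam h1.le le_rfl h2]
    field_simp
    ring
  · push_neg at h1 h2
    have hgl : lam ≤ γ * lam := by nlinarith
    rw [← intervalIntegral.integral_add_adjacent_intervals (b := γ * lam)
      (integrand_intble γ lam 0 (γ*lam)) (integrand_intble γ lam (γ*lam) t),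
      int3 γ lam (γ*lam) t hγ hlam h2.le le_rfl,
      ← intervalIntegral.integral_add_adjacent_intervals (b := lam)
      (integrand_intble γ lam 0 lam) (integrand_intble γ lam lam (γ*lam)),
      int1 γ lam 0 lam hγ hlam hlam.le le_rfl le_rfl,
      int2 γ lam lam (γ*lam) hγ hlam hgl le_rfl le_rfl]
    field_simp
    ring

lemma Q_le_Pfun (γ lam t : ℝ) (hγ : 1 < γ) (hlam : 0 < lam) :
    (2*γ*lam*t - t^2 - lam^2) / (2*(γ-1)) ≤ Pfun γ lam t := by
  unfold Pfun
  split_ifs with h1 h2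
  · rw [div_le_iff₀ (by linarith)]; nlinarith [sq_nonneg (t - lam)]
  · exact le_rfl
  · rw [div_le_iff₀ (by linarith)]; push_neg at h2; nlinarith [sq_nonneg (t - γ*lam)]

-- case 2 lemma
lemma oneDim2 (lam ϑ γ a r : ℝ) (hlam : 0 < lam) (hϑ : 0 < ϑ) (hD : 1 < (γ-1)*ϑ)
    (hγ : 1 < γ) (h1 : lam + lam/ϑ < a) (h2 : a ≤ γ*lam) (hr : 0 ≤ r) :
    ϑ/2*(a - ((γ-1)*ϑ*a - γ*lam)/((γ-1)*ϑ-1))^2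
        + Pfun γ lam (((γ-1)*ϑ*a - γ*lam)/((γ-1)*ϑ-1))
      ≤ ϑ/2*(a-r)^2 + Pfun γ lam r := by
  have hD1 : (0:ℝ) < (γ-1)*ϑ-1 := by linarith
  have hγ1 : γ - 1 ≠ 0 := by linarith
  set s := ((γ-1)*ϑ*a - γ*lam)/((γ-1)*ϑ-1) with hs
  have hϑa : lam * ϑ < a * ϑ - lam := by
    have : (lam + lam/ϑ) * ϑ < a * ϑ := by exact mul_lt_mul_of_pos_right h1 hϑ
    rw [add_mul, div_mul_cancel₀ _ (ne_of_gt hϑ)] at this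
    linarith
  have hsl : lam < s := by
    rw [hs, lt_div_iff₀ hD1]; nlinarith
  have hsg : s ≤ γ*lam := by
    rw [hs, div_le_iff₀ hD1]; nlinarith
  have hPs : Pfun γ lam s = (2*γ*lam*s - s^2 - lam^2) / (2*(γ-1)) := by
    unfold Pfun
    rw [if_neg (by linarith), if_pos hsg]
  rw [hPs]
  calc ϑ/2*(a - s)^2 + (2*γ*lam*s - s^2 - lam^2) / (2*(γ-1))
      ≤ ϑ/2*(a-r)^2 + (2*γ*lam*r - r^2 - lam^2) / (2*(γ-1)) := by
        rw [← sub_nonneg]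
        have key : ϑ/2*(a-r)^2 + (2*γ*lam*r - r^2 - lam^2) / (2*(γ-1))
            - (ϑ/2*(a - s)^2 + (2*γ*lam*s - s^2 - lam^2) / (2*(γ-1)))
            = ((γ-1)*ϑ-1)/(2*(γ-1)) * (r - s)^2 := by
          have hsD : s*((γ-1)*ϑ-1) = (γ-1)*ϑ*a - γ*lam := by rw [hs]; field_simp
          field_simp
          linear_combination (2*(r-s)) * hsD
        rw [key]
        exact mul_nonneg (div_nonneg (by linarith) (by linarith)) (sq_nonneg _)
    _ ≤ ϑ/2*(a-r)^2 + Pfun γ lam r := by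
        have := Q_le_Pfun γ lam r hγ hlam
        linarith

-- case 3 lemma
lemma oneDim3 (lam ϑ γ a r : ℝ) (hlam : 0 < lam) (hϑ : 0 < ϑ) (hD : 1 < (γ-1)*ϑ)
    (hγ : 1 < γ) (h2 : γ*lam < a) (hr : 0 ≤ r) :
    Pfun γ lam a ≤ ϑ/2*(a-r)^2 + Pfun γ lam r := by
  have hgl : lam < γ * lam := by nlinarith
  have hPa : Pfun γ lam a = lam^2 * (γ+1) / 2 := by
    unfold Pfun; rw [if_neg (by linarith), if_neg (by linarith)]
  rw [hPa]
  unfold Pfun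
  split_ifs with g1 g2
  · -- r ≤ lam
    nlinarith [mul_nonneg (sub_nonneg.2 g1) (sub_pos.2 (by linarith : (1:ℝ) < (γ-1)*ϑ)).le,
        sq_nonneg (a - r), mul_pos hlam hlam, sq_nonneg (γ*lam - r),
        mul_nonneg (mul_nonneg hϑ.le (sub_nonneg.2 g1)) (by linarith : (0:ℝ) ≤ a - lam),
        mul_nonneg (sub_nonneg.2 g1) hlam.le]
  · -- lam < r ≤ γ lam
    rw [← sub_nonneg]
    have hne : γ - 1 ≠ 0 := by linarith
    have key : ϑ/2*(a-r)^2 + (2*γ*lam*r - r^2 - lam^2)/(2*(γ-1)) - lam^2*(γ+1)/2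
        = (ϑ*(γ-1)*(a-r)^2 - (γ*lam - r)^2) / (2*(γ-1)) := by field_simp; ring
    rw [key]
    apply div_nonneg _ (by linarith)
    have h1 : (γ*lam - r)^2 ≤ (a - r)^2 := by nlinarith
    nlinarith [sq_nonneg (γ*lam - r)]
  · nlinarith [sq_nonneg (a - r)]

-- case 1 lemma
set_option maxHeartbeats 1600000 in
lemma oneDim1 (lam ϑ γ a r : ℝ) (hlam : 0 < lam) (hϑ : 0 < ϑ) (hD : 1 < (γ-1)*ϑ)
    (hγ : 1 < γ) (h1 : a ≤ lam + lam/ϑ) (ha : 0 ≤ a) (hr : 0 ≤ r) :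
    ϑ/2*(a - max (a - lam/ϑ) 0)^2 + Pfun γ lam (max (a - lam/ϑ) 0)
      ≤ ϑ/2*(a-r)^2 + Pfun γ lam r := by
  have hγ1 : (0:ℝ) < γ - 1 := by linarith
  set X := lam/ϑ with hXdef
  have hX : ϑ * X = lam := mul_div_cancel₀ _ (ne_of_gt hϑ)
  have hXpos : 0 < X := div_pos hlam hϑ
  clear_value X
  have hXX : lam * X = ϑ * X^2 := by rw [← hX]; ring
  have hγX : lam + X ≤ γ * lam := by
    have h5 : (γ*lam - (lam + X))*ϑ = (γ-1)*ϑ*lam - lam := by linear_combination -hX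
    nlinarith [mul_lt_mul_of_pos_right hD hlam]
  have hmaxle : max (a - X) 0 ≤ lam := by
    apply max_le _ hlam.le
    nlinarith [mul_le_mul_of_nonneg_right h1 hϑ.le]
  have hPm : Pfun γ lam (max (a - X) 0) = lam * max (a - X) 0 := by
    unfold Pfun; rw [if_pos hmaxle]
  rw [hPm]
  rcases le_or_gt (a - X) 0 with hax | hax
  · -- r* = 0, note a*ϑ ≤ lam
    rw [max_eq_right hax]
    have haX : a ≤ X := by linarith
    have haϑ : a * ϑ ≤ lam := by nlinarith [mul_le_mul_of_nonneg_right haX hϑ.le]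
    simp only [mul_zero, sub_zero, add_zero]
    unfold Pfun
    split_ifs with g1 g2
    · nlinarith [mul_nonneg hr (by linarith : (0:ℝ) ≤ lam - a*ϑ), mul_nonneg hϑ.le (sq_nonneg r)]
    · rw [← sub_nonneg]
      push_neg at g1
      have key : ϑ/2*(a-r)^2 + (2*γ*lam*r - r^2 - lam^2)/(2*(γ-1)) - ϑ/2*a^2
          = (((γ-1)*ϑ-1)*r^2 + 2*r*(γ*lam - (γ-1)*ϑ*a) - lam^2) / (2*(γ-1)) := by
        field_simp; ring
      rw [key]
      apply div_nonneg _ (by linarith)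
      have hGL : lam ≤ γ*lam - (γ-1)*ϑ*a := by nlinarith [mul_le_mul_of_nonneg_left haϑ hγ1.le]
      nlinarith [mul_nonneg (by linarith : (0:ℝ) ≤ ((γ-1)*ϑ-1)) (sq_nonneg r),
        mul_le_mul_of_nonneg_left hGL (by linarith : (0:ℝ) ≤ 2*r),
        mul_lt_mul_of_pos_left g1 hlam]
    · -- r > γ lam : RHS ≥ lam^2(γ+1)/2 ≥ ϑa^2/2
      push_neg at g1 g2
      have h6 : ϑ * a^2 ≤ lam * a := by nlinarith
      have hXg : X < (γ-1)*lam := by nlinarith [mul_lt_mul_of_pos_right hD hXpos]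
      have h7 : lam * a ≤ lam * (lam + X) := mul_le_mul_of_nonneg_left h1 hlam.le
      have h8 : lam * X ≤ lam * ((γ-1)*lam) := mul_le_mul_of_nonneg_left hXg.le hlam.le
      linarith [h6, h7, h8, mul_nonneg hϑ.le (sq_nonneg (a - r)), mul_pos hlam hlam]
  · -- r* = a - X
    rw [max_eq_left hax.le]
    unfold Pfun
    split_ifs with g1 g2
    · -- r ≤ lam : perfect square
      nlinarith [mul_nonneg hϑ.le (sq_nonneg (a - r - X)), hX]
    · -- lam < r ≤ γ lam
      push_neg at g1
      rw [← sub_nonneg]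
      have key : ϑ/2*(a-r)^2 + (2*γ*lam*r - r^2 - lam^2)/(2*(γ-1))
          - (ϑ/2*(a - (a - X))^2 + lam * (a - X))
          = ((γ-1)*(ϑ*(a-r)^2 - ϑ*X^2 - 2*lam*(a - X) + 2*lam*r) - (r - lam)^2) / (2*(γ-1)) := by
        field_simp; ring
      rw [key]
      apply div_nonneg _ (by linarith)
      have hsq : ϑ*(a-r)^2 - ϑ*X^2 - 2*lam*(a - X) + 2*lam*r = ϑ*(a-r-X)^2 := by
        linear_combination 2*(a-r)*hX + 2*hXX
      rw [hsq]
      nlinarith [mul_nonneg (mul_nonneg hγ1.le hϑ.le) (sq_nonneg (a - r - X)),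
        mul_nonneg hϑ.le (sq_nonneg (a - r - X)), sq_nonneg (r - lam)]
    · -- r > γ lam
      push_neg at g1 g2
      have hm : ϑ/2*(a - (a - X))^2 + lam*(a-X) ≤ lam^2*(γ+1)/2 := by
        nlinarith [mul_le_mul_of_nonneg_left h1 hlam.le, hXX,
          mul_le_mul_of_nonneg_left hγX hlam.le]
      nlinarith [sq_nonneg (a - r)]

lemma norm_softThreshold {p : ℕ} (κ : EuclideanSpace ℝ (Fin p)) (t : ℝ) (ht : 0 < t) :
    ‖softThreshold κ t‖ = max (‖κ‖ - t) 0 := by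
  unfold softThreshold
  rcases eq_or_ne κ 0 with h | h
  · rw [h]; simp only [smul_zero, norm_zero]
    rw [eq_comm, max_eq_right]; linarith
  · have ha : 0 < ‖κ‖ := norm_pos_iff.2 h
    rw [norm_smul, Real.norm_eq_abs, abs_of_nonneg (le_max_right _ _),
      max_mul_of_nonneg _ _ ha.le, zero_mul]
    congr 1
    field_simp

lemma norm_sub_softThreshold {p : ℕ} (κ : EuclideanSpace ℝ (Fin p)) (t : ℝ) (ht : 0 < t) :
    ‖κ - softThreshold κ t‖ = ‖κ‖ - max (‖κ‖ - t) 0 := by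
  unfold softThreshold
  rcases eq_or_ne κ 0 with h | h
  · rw [h]; simp only [smul_zero, sub_zero, norm_zero]
    rw [eq_comm, sub_eq_self, max_eq_right]; linarith
  · have ha : 0 < ‖κ‖ := norm_pos_iff.2 h
    have hc : max (1 - t/‖κ‖) 0 ≤ 1 :=
      max_le (by nlinarith [div_pos ht ha]) zero_le_one
    have he : κ - max (1 - t/‖κ‖) 0 • κ = (1 - max (1 - t/‖κ‖) 0) • κ := by
      rw [sub_smul, one_smul]
    rw [he, norm_smul, Real.norm_eq_abs, abs_of_nonneg (by linarith),
      sub_mul, one_mul, max_mul_of_nonneg _ _ ha.le, zero_mul]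
    congr 2
    field_simp


set_option maxHeartbeats 1600000 in
/-- For `γ > 1 + 1/ϑ`, the three-case SCAD update `scadProx γ lam ϑ κ` is a
global minimizer of `ζ ↦ (ϑ/2)‖κ − ζ‖² + p_γ(‖ζ‖, λ)` on `ℝ^p`. -/
theorem scadProx_isMinimizer
    (p : ℕ) (hp : 1 ≤ p) (lam ϑ γ : ℝ)
    (hlam : 0 < lam) (hϑ : 0 < ϑ) (hγ : 1 + 1 / ϑ < γ)
    (κ : EuclideanSpace ℝ (Fin p)) :
    ∀ ζ : EuclideanSpace ℝ (Fin p),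
      ϑ / 2 * ‖κ - scadProx γ lam ϑ κ‖ ^ 2 + scadPenalty γ lam ‖scadProx γ lam ϑ κ‖
        ≤ ϑ / 2 * ‖κ - ζ‖ ^ 2 + scadPenalty γ lam ‖ζ‖ := by
  intro ζ
  have h1ϑ : 0 < 1/ϑ := by positivity
  have hγ1 : (1:ℝ) < γ := by linarith
  have hγ1' : (0:ℝ) < γ - 1 := by linarith
  have hD : 1 < (γ-1)*ϑ := by
    have he : (γ - 1 - 1/ϑ)*ϑ = (γ-1)*ϑ - 1 := by field_simp
    nlinarith [mul_pos (by linarith : (0:ℝ) < γ - 1 - 1/ϑ) hϑ]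
  have hD0 : (0:ℝ) < (γ-1)*ϑ := by linarith
  have hD1 : (0:ℝ) < (γ-1)*ϑ - 1 := by linarith
  have ha : (0:ℝ) ≤ ‖κ‖ := norm_nonneg κ
  have hr : (0:ℝ) ≤ ‖ζ‖ := norm_nonneg ζ
  rw [scadPenalty_eq γ lam _ hγ1 hlam (norm_nonneg _),
    scadPenalty_eq γ lam _ hγ1 hlam (norm_nonneg _)]
  have hRHS : ϑ/2*(‖κ‖ - ‖ζ‖)^2 ≤ ϑ/2*‖κ - ζ‖^2 := by
    have h := abs_norm_sub_norm_le κ ζ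
    have h2 : (‖κ‖ - ‖ζ‖)^2 ≤ ‖κ - ζ‖^2 := by
      rw [← sq_abs (‖κ‖ - ‖ζ‖)]
      exact pow_le_pow_left₀ (abs_nonneg _) h 2
    have := mul_le_mul_of_nonneg_left h2 (by positivity : (0:ℝ) ≤ ϑ/2)
    linarith
  refine le_trans ?_ (add_le_add_left hRHS (Pfun γ lam ‖ζ‖))
  unfold scadProx
  split_ifs with h1 h2
  · -- branch 1
    have hX : 0 < lam/ϑ := div_pos hlam hϑ
    rw [norm_softThreshold κ _ hX, norm_sub_softThreshold κ _ hX]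
    exact oneDim1 lam ϑ γ ‖κ‖ ‖ζ‖ hlam hϑ hD hγ1 h1 ha hr
  · -- branch 2
    push_neg at h1
    have hapos : 0 < ‖κ‖ := lt_trans (by positivity) h1
    have hane : ‖κ‖ ≠ 0 := ne_of_gt hapos
    have hDne : (γ-1)*ϑ ≠ 0 := ne_of_gt hD0
    have hD1ne : (γ-1)*ϑ - 1 ≠ 0 := ne_of_gt hD1
    have hYpos : 0 < γ*lam/((γ-1)*ϑ) := by positivity
    have hdiv : lam/ϑ*ϑ = lam := div_mul_cancel₀ _ (ne_of_gt hϑ)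
    have hYa : γ*lam/((γ-1)*ϑ) < ‖κ‖ := by
      rw [div_lt_iff₀ hD0]
      have hd2 : lam/ϑ*ϑ*(γ-1) = lam*(γ-1) := by rw [hdiv]
      nlinarith [mul_lt_mul_of_pos_right h1 hD0, mul_pos hlam hD1]
    have hβne : 1 - 1/((γ-1)*ϑ) ≠ 0 := by
      have : 1/((γ-1)*ϑ) < 1 := by rw [div_lt_one hD0]; linarith
      linarith
    have hβpos : 0 < (1 - 1/((γ-1)*ϑ))⁻¹ := by
      apply inv_pos.2
      have : 1/((γ-1)*ϑ) < 1 := by rw [div_lt_one hD0]; linarith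
      linarith
    have hsa : ((γ-1)*ϑ*‖κ‖ - γ*lam)/((γ-1)*ϑ-1) ≤ ‖κ‖ := by
      rw [div_le_iff₀ hD1]; nlinarith
    -- norm of ζ*
    have hn1 : ‖(1 - 1/((γ-1)*ϑ))⁻¹ • softThreshold κ (γ*lam/((γ-1)*ϑ))‖
        = ((γ-1)*ϑ*‖κ‖ - γ*lam)/((γ-1)*ϑ-1) := by
      rw [norm_smul, norm_softThreshold κ _ hYpos, Real.norm_eq_abs,
        abs_of_nonneg hβpos.le, max_eq_left (by linarith)]
      field_simp
    -- norm of κ - ζ*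
    have hc : max (1 - γ*lam/((γ-1)*ϑ)/‖κ‖) 0 = 1 - γ*lam/((γ-1)*ϑ)/‖κ‖ :=
      max_eq_left (by rw [sub_nonneg, div_le_one hapos]; exact hYa.le)
    have hn2 : ‖κ - (1 - 1/((γ-1)*ϑ))⁻¹ • softThreshold κ (γ*lam/((γ-1)*ϑ))‖
        = ‖κ‖ - ((γ-1)*ϑ*‖κ‖ - γ*lam)/((γ-1)*ϑ-1) := by
      unfold softThreshold
      rw [hc, smul_smul]
      have he : κ - ((1 - 1/((γ-1)*ϑ))⁻¹ * (1 - γ*lam/((γ-1)*ϑ)/‖κ‖)) • κ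
          = (1 - (1 - 1/((γ-1)*ϑ))⁻¹ * (1 - γ*lam/((γ-1)*ϑ)/‖κ‖)) • κ := by
        rw [sub_smul, one_smul]
      rw [he, norm_smul, Real.norm_eq_abs]
      have hval : 1 - (1 - 1/((γ-1)*ϑ))⁻¹ * (1 - γ*lam/((γ-1)*ϑ)/‖κ‖)
          = (‖κ‖ - ((γ-1)*ϑ*‖κ‖ - γ*lam)/((γ-1)*ϑ-1))/‖κ‖ := by
        field_simp
      rw [hval, abs_of_nonneg (div_nonneg (by linarith) ha), div_mul_cancel₀ _ hane]
    rw [hn1, hn2]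
    exact oneDim2 lam ϑ γ ‖κ‖ ‖ζ‖ hlam hϑ hD hγ1 h1 h2 hr
  · -- branch 3
    push_neg at h1 h2
    rw [sub_self, norm_zero]
    have := oneDim3 lam ϑ γ ‖κ‖ ‖ζ‖ hlam hϑ hD hγ1 h2 hr
    simpa using this
end

section
/- Let n, p, q, s ≥ 1, let y ∈ ℝⁿ, let Z be a real n × q matrix of full column rank, X a real n × p matrix, A a real s × p matrix, c ∈ ℝ^s, ϑ > 0, and let W be a real symmetric positive definite n × n matrix. Set Q = W − W Z (Zᵀ W Z)⁻¹ Zᵀ W and assume Xᵀ Q X + ϑ Aᵀ A is positive definite. Then the quadratic function f(β, η) = (y − Zη − Xβ)ᵀ W (y − Zη − Xβ) + ϑ (Aβ − c)ᵀ (Aβ − c) on ℝ^p × ℝ^q attains its unique global minimum at β* = (Xᵀ Q X + ϑ Aᵀ A)⁻¹ (Xᵀ Q y + ϑ Aᵀ c) and η* = (Zᵀ W Z)⁻¹ Zᵀ W (y − X β*). -/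
open Matrix

private lemma dot_shift {m k : Type*} [Fintype m] [Fintype k]
    (B : Matrix m k ℝ) (x : k → ℝ) (w : m → ℝ) :
    (B *ᵥ x) ⬝ᵥ w = x ⬝ᵥ (Bᵀ *ᵥ w) := by
  rw [dotProduct_mulVec, vecMul_transpose]

private lemma sym_swap {m : Type*} [Fintype m] {S : Matrix m m ℝ} (hS : Sᵀ = S)
    (x w : m → ℝ) : x ⬝ᵥ (S *ᵥ w) = w ⬝ᵥ (S *ᵥ x) := by
  rw [show w ⬝ᵥ (S *ᵥ x) = (S *ᵥ x) ⬝ᵥ w from dotProduct_comm _ _, dot_shift, hS]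

private lemma quad_expand {m k : Type*} [Fintype m] [Fintype k]
    {S : Matrix m m ℝ} (hS : Sᵀ = S) (B : Matrix m k ℝ) (v : m → ℝ) (x : k → ℝ) :
    (v - B *ᵥ x) ⬝ᵥ (S *ᵥ (v - B *ᵥ x))
      = v ⬝ᵥ (S *ᵥ v) - 2 * (x ⬝ᵥ (Bᵀ *ᵥ (S *ᵥ v))) + x ⬝ᵥ ((Bᵀ * S * B) *ᵥ x) := by
  have h1 : v ⬝ᵥ (S *ᵥ (B *ᵥ x)) = x ⬝ᵥ (Bᵀ *ᵥ (S *ᵥ v)) := by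
    rw [sym_swap hS, dot_shift]
  have h2 : (B *ᵥ x) ⬝ᵥ (S *ᵥ v) = x ⬝ᵥ (Bᵀ *ᵥ (S *ᵥ v)) := dot_shift _ _ _
  have h3 : (B *ᵥ x) ⬝ᵥ (S *ᵥ (B *ᵥ x)) = x ⬝ᵥ ((Bᵀ * S * B) *ᵥ x) := by
    rw [dot_shift]; simp only [mulVec_mulVec, Matrix.mul_assoc]
  simp only [mulVec_sub, dotProduct_sub, sub_dotProduct, h1, h2, h3]
  ring

private lemma quad_expand' {m k : Type*} [Fintype m] [Fintype k]
    (B : Matrix m k ℝ) (x : k → ℝ) (c : m → ℝ) :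
    (B *ᵥ x - c) ⬝ᵥ (B *ᵥ x - c)
      = x ⬝ᵥ ((Bᵀ * B) *ᵥ x) - 2 * (x ⬝ᵥ (Bᵀ *ᵥ c)) + c ⬝ᵥ c := by
  have h1 : (B *ᵥ x) ⬝ᵥ c = x ⬝ᵥ (Bᵀ *ᵥ c) := dot_shift _ _ _
  have h2 : c ⬝ᵥ (B *ᵥ x) = x ⬝ᵥ (Bᵀ *ᵥ c) := by rw [dotProduct_comm]; exact h1
  have h3 : (B *ᵥ x) ⬝ᵥ (B *ᵥ x) = x ⬝ᵥ ((Bᵀ * B) *ᵥ x) := by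
    rw [dot_shift]; simp only [mulVec_mulVec, Matrix.mul_assoc]
  simp only [dotProduct_sub, sub_dotProduct, h1, h2, h3]
  ring

/-- Closed form for the joint `(β, η)`-update of the ADMM algorithm: the
weighted penalized least-squares criterion
`f(β, η) = (y − Zη − Xβ)ᵀ W (y − Zη − Xβ) + ϑ (Aβ − c)ᵀ (Aβ − c)`
attains its unique global minimum at
`β* = (Xᵀ Q X + ϑ Aᵀ A)⁻¹ (Xᵀ Q y + ϑ Aᵀ c)` and
`η* = (Zᵀ W Z)⁻¹ Zᵀ W (y − X β*)`, where `Q = W − W Z (Zᵀ W Z)⁻¹ Zᵀ W`. -/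
theorem admm_beta_eta_update_closed_form
    (n p q s : ℕ) (hn : 1 ≤ n) (hp : 1 ≤ p) (hq : 1 ≤ q) (hs : 1 ≤ s)
    (y : Fin n → ℝ)
    (Z : Matrix (Fin n) (Fin q) ℝ) (X : Matrix (Fin n) (Fin p) ℝ)
    (A : Matrix (Fin s) (Fin p) ℝ) (c : Fin s → ℝ)
    (ϑ : ℝ) (hϑ : 0 < ϑ)
    (W : Matrix (Fin n) (Fin n) ℝ) (hW : W.PosDef)
    (hZ : LinearIndependent ℝ (fun j : Fin q => Zᵀ j))
    (Q : Matrix (Fin n) (Fin n) ℝ)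
    (hQ : Q = W - W * Z * (Zᵀ * W * Z)⁻¹ * Zᵀ * W)
    (hpos : (Xᵀ * Q * X + ϑ • (Aᵀ * A)).PosDef)
    (βstar : Fin p → ℝ) (ηstar : Fin q → ℝ)
    (hβstar : βstar = (Xᵀ * Q * X + ϑ • (Aᵀ * A))⁻¹ *ᵥ (Xᵀ *ᵥ (Q *ᵥ y) + ϑ • (Aᵀ *ᵥ c)))
    (hηstar : ηstar = (Zᵀ * W * Z)⁻¹ *ᵥ (Zᵀ *ᵥ (W *ᵥ (y - X *ᵥ βstar)))) :
    ∀ β : Fin p → ℝ, ∀ η : Fin q → ℝ, (β, η) ≠ (βstar, ηstar) →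
      (y - Z *ᵥ ηstar - X *ᵥ βstar) ⬝ᵥ (W *ᵥ (y - Z *ᵥ ηstar - X *ᵥ βstar))
          + ϑ * ((A *ᵥ βstar - c) ⬝ᵥ (A *ᵥ βstar - c))
        < (y - Z *ᵥ η - X *ᵥ β) ⬝ᵥ (W *ᵥ (y - Z *ᵥ η - X *ᵥ β))
          + ϑ * ((A *ᵥ β - c) ⬝ᵥ (A *ᵥ β - c)) := by
  intro β η hne
  set M := Zᵀ * W * Z with hMdef
  have hWT : Wᵀ = W := by
    have := hW.isHermitian
    rwa [Matrix.IsHermitian, conjTranspose_eq_transpose_of_trivial] at this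
  -- M is positive definite
  have hZinj : Function.Injective Z.mulVec := Matrix.mulVec_injective_iff.mpr hZ
  have hM : M.PosDef := by
    refine Matrix.PosDef.of_dotProduct_mulVec_pos ?_ ?_
    · rw [Matrix.IsHermitian, conjTranspose_eq_transpose_of_trivial, hMdef]
      simp [Matrix.transpose_mul, Matrix.mul_assoc, hWT]
    · intro x hx
      have hZx : Z *ᵥ x ≠ 0 := fun h => hx (hZinj (by simpa using h))
      have := hW.dotProduct_mulVec_pos hZx
      simp only [star_trivial] at this ⊢
      rw [dot_shift] at this
      simpa only [mulVec_mulVec, ← Matrix.mul_assoc, hMdef] using this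
  have hMT : Mᵀ = M := by
    have := hM.isHermitian
    rwa [Matrix.IsHermitian, conjTranspose_eq_transpose_of_trivial] at this
  have hMdet : IsUnit M.det := (Matrix.isUnit_iff_isUnit_det _).mp hM.isUnit
  have hMMinv : M * M⁻¹ = 1 := Matrix.mul_nonsing_inv _ hMdet
  have hMinvM : M⁻¹ * M = 1 := Matrix.nonsing_inv_mul _ hMdet
  have hMinvT : (M⁻¹)ᵀ = M⁻¹ := by rw [Matrix.transpose_nonsing_inv, hMT]
  -- Q facts
  have hQT : Qᵀ = Q := by
    rw [hQ]
    simp [Matrix.transpose_sub, Matrix.transpose_mul, Matrix.mul_assoc, hWT, hMinvT]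
  have hQZ : Q * Z = 0 := by
    have h1 : W * Z * M⁻¹ * Zᵀ * W * Z = W * Z * (M⁻¹ * M) := by
      rw [hMdef]; simp only [Matrix.mul_assoc]
    rw [hQ, Matrix.sub_mul, h1, hMinvM, Matrix.mul_one, sub_self]
  have hZQ : Zᵀ * Q = 0 := by
    have : Zᵀ * Q = (Q * Z)ᵀ := by rw [Matrix.transpose_mul, hQT]
    rw [this, hQZ, Matrix.transpose_zero]
  -- H facts
  set H := Xᵀ * Q * X + ϑ • (Aᵀ * A) with hHdef
  have hHdet : IsUnit H.det := (Matrix.isUnit_iff_isUnit_det _).mp hpos.isUnit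
  have hHMinv : H * H⁻¹ = 1 := Matrix.mul_nonsing_inv _ hHdet
  have hS1T : (Xᵀ * Q * X)ᵀ = Xᵀ * Q * X := by
    simp [Matrix.transpose_mul, Matrix.mul_assoc, hQT]
  have hS2T : (Aᵀ * A)ᵀ = Aᵀ * A := by simp [Matrix.transpose_mul]
  have hnormal : (Xᵀ * Q * X) *ᵥ βstar + ϑ • ((Aᵀ * A) *ᵥ βstar)
      = Xᵀ *ᵥ (Q *ᵥ y) + ϑ • (Aᵀ *ᵥ c) := by
    have : H *ᵥ βstar = Xᵀ *ᵥ (Q *ᵥ y) + ϑ • (Aᵀ *ᵥ c) := by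
      rw [hβstar, mulVec_mulVec, hHMinv, one_mulVec]
    rwa [hHdef, add_mulVec, smul_mulVec] at this
  have hdot : ∀ u : Fin p → ℝ,
      u ⬝ᵥ ((Xᵀ * Q * X) *ᵥ βstar) + ϑ * (u ⬝ᵥ ((Aᵀ * A) *ᵥ βstar))
        = u ⬝ᵥ (Xᵀ *ᵥ (Q *ᵥ y)) + ϑ * (u ⬝ᵥ (Aᵀ *ᵥ c)) := by
    intro u
    have := congrArg (fun v => u ⬝ᵥ v) hnormal
    simpa [dotProduct_add, dotProduct_smul, smul_eq_mul] using this
  -- Claim A : decomposition in η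
  have claimA : ∀ (β' : Fin p → ℝ) (η' : Fin q → ℝ),
      (y - Z *ᵥ η' - X *ᵥ β') ⬝ᵥ (W *ᵥ (y - Z *ᵥ η' - X *ᵥ β'))
        = (y - X *ᵥ β') ⬝ᵥ (Q *ᵥ (y - X *ᵥ β'))
          + (η' - M⁻¹ *ᵥ (Zᵀ *ᵥ (W *ᵥ (y - X *ᵥ β'))))
              ⬝ᵥ (M *ᵥ (η' - M⁻¹ *ᵥ (Zᵀ *ᵥ (W *ᵥ (y - X *ᵥ β'))))) := by
    intro β' η'
    set r := y - X *ᵥ β' with hr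
    set ηh := M⁻¹ *ᵥ (Zᵀ *ᵥ (W *ᵥ r)) with hηh
    set u := r - Z *ᵥ ηh with hu
    set e := η' - ηh with he
    have hsplit : y - Z *ᵥ η' - X *ᵥ β' = u - Z *ᵥ e := by
      rw [hu, he, hr, mulVec_sub]; abel
    have h2 : Zᵀ *ᵥ (W *ᵥ (Z *ᵥ ηh)) = M *ᵥ ηh := by
      simp only [mulVec_mulVec, ← Matrix.mul_assoc, hMdef]
    have h3 : M *ᵥ ηh = Zᵀ *ᵥ (W *ᵥ r) := by
      rw [hηh, mulVec_mulVec, hMMinv, one_mulVec]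
    have hZWu : Zᵀ *ᵥ (W *ᵥ u) = 0 := by
      rw [hu, mulVec_sub, mulVec_sub, h2, h3, sub_self]
    have hWu : W *ᵥ u = Q *ᵥ r := by
      have h4 : W *ᵥ (Z *ᵥ ηh) = (W * Z * M⁻¹ * Zᵀ * W) *ᵥ r := by
        rw [hηh]; simp only [mulVec_mulVec, ← Matrix.mul_assoc]
      rw [hu, mulVec_sub, h4, hQ, Matrix.sub_mulVec]
    have c1 : (Z *ᵥ e) ⬝ᵥ (W *ᵥ u) = 0 := by
      rw [dot_shift, hZWu, dotProduct_zero]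
    have c2 : u ⬝ᵥ (W *ᵥ (Z *ᵥ e)) = 0 := by rw [sym_swap hWT]; exact c1
    have c3 : (Z *ᵥ e) ⬝ᵥ (W *ᵥ (Z *ᵥ e)) = e ⬝ᵥ (M *ᵥ e) := by
      rw [dot_shift]; simp only [mulVec_mulVec, ← Matrix.mul_assoc, hMdef]
    have c4 : u ⬝ᵥ (W *ᵥ u) = r ⬝ᵥ (Q *ᵥ r) := by
      have h5 : (Z *ᵥ ηh) ⬝ᵥ (Q *ᵥ r) = 0 := by
        rw [dot_shift, mulVec_mulVec, hZQ, Matrix.zero_mulVec, dotProduct_zero]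
      rw [hWu, hu, sub_dotProduct, h5, sub_zero]
    rw [hsplit]
    simp only [mulVec_sub, dotProduct_sub, sub_dotProduct, c1, c2, c3, c4]
    ring
  -- Claim B : decomposition in β
  have claimB : ∀ β' : Fin p → ℝ,
      (y - X *ᵥ β') ⬝ᵥ (Q *ᵥ (y - X *ᵥ β')) + ϑ * ((A *ᵥ β' - c) ⬝ᵥ (A *ᵥ β' - c))
        = (y - X *ᵥ βstar) ⬝ᵥ (Q *ᵥ (y - X *ᵥ βstar))
          + ϑ * ((A *ᵥ βstar - c) ⬝ᵥ (A *ᵥ βstar - c))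
          + (β' - βstar) ⬝ᵥ (H *ᵥ (β' - βstar)) := by
    intro β'
    have w1 : βstar ⬝ᵥ ((Xᵀ * Q * X) *ᵥ β') = β' ⬝ᵥ ((Xᵀ * Q * X) *ᵥ βstar) :=
      sym_swap hS1T _ _
    have w2 : βstar ⬝ᵥ ((Aᵀ * A) *ᵥ β') = β' ⬝ᵥ ((Aᵀ * A) *ᵥ βstar) :=
      sym_swap hS2T _ _
    have hdHd : (β' - βstar) ⬝ᵥ (H *ᵥ (β' - βstar))
        = (β' ⬝ᵥ ((Xᵀ * Q * X) *ᵥ β') - 2 * (β' ⬝ᵥ ((Xᵀ * Q * X) *ᵥ βstar))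
            + βstar ⬝ᵥ ((Xᵀ * Q * X) *ᵥ βstar))
          + ϑ * (β' ⬝ᵥ ((Aᵀ * A) *ᵥ β') - 2 * (β' ⬝ᵥ ((Aᵀ * A) *ᵥ βstar))
            + βstar ⬝ᵥ ((Aᵀ * A) *ᵥ βstar)) := by
      rw [hHdef]
      simp only [Matrix.add_mulVec, smul_mulVec, mulVec_sub, dotProduct_add,
        dotProduct_smul, smul_eq_mul, dotProduct_sub, sub_dotProduct, w1, w2]
      ring
    rw [quad_expand hQT X y β', quad_expand hQT X y βstar,
      quad_expand' A β' c, quad_expand' A βstar c, hdHd]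
    linear_combination 2 * hdot β' - 2 * hdot βstar
  -- assemble
  rw [claimA β η, claimA βstar ηstar]
  have he0 : ηstar - M⁻¹ *ᵥ (Zᵀ *ᵥ (W *ᵥ (y - X *ᵥ βstar))) = 0 :=
    sub_eq_zero_of_eq hηstar
  rw [he0, Matrix.mulVec_zero, dotProduct_zero, add_zero]
  have hkey : 0 < (β - βstar) ⬝ᵥ (H *ᵥ (β - βstar))
      + (η - M⁻¹ *ᵥ (Zᵀ *ᵥ (W *ᵥ (y - X *ᵥ β))))
          ⬝ᵥ (M *ᵥ (η - M⁻¹ *ᵥ (Zᵀ *ᵥ (W *ᵥ (y - X *ᵥ β))))) := by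
    by_cases hβ : β = βstar
    · have hη : η ≠ ηstar := by
        intro h; exact hne (by rw [hβ, h])
      have he : η - M⁻¹ *ᵥ (Zᵀ *ᵥ (W *ᵥ (y - X *ᵥ β))) ≠ 0 := by
        rw [hβ, ← hηstar]
        exact sub_ne_zero_of_ne hη
      have h1 := hM.dotProduct_mulVec_pos he
      simp only [star_trivial] at h1
      have h2 : (β - βstar) ⬝ᵥ (H *ᵥ (β - βstar)) = 0 := by
        rw [hβ, sub_self, Matrix.mulVec_zero, dotProduct_zero]
      linarith
    · have hd : β - βstar ≠ 0 := sub_ne_zero_of_ne hβ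
      have h1 := hpos.dotProduct_mulVec_pos hd
      simp only [star_trivial] at h1
      have h2 := hM.posSemidef.dotProduct_mulVec_nonneg (η - M⁻¹ *ᵥ (Zᵀ *ᵥ (W *ᵥ (y - X *ᵥ β))))
      simp only [star_trivial, RCLike.re_to_real] at h2
      linarith
  linarith [claimB β, hkey]
end

section
/- Let m, p, K ≥ 1, let 𝒢₁, …, 𝒢_K be a partition of {1, …, m} into nonempty sets with K ≥ 2, let γ > 1 and λ > 0, and let p_γ(t, λ) = λ ∫₀^{|t|} min{1, (γ − x/λ)₊/(γ − 1)} dx be the SCAD penalty. Let α₁⁰, …, α_K⁰ ∈ ℝ^p satisfy ‖α_k⁰ − α_{k'}⁰‖ ≥ b for all k ≠ k', let β₁, …, β_m ∈ ℝ^p with β_i⁰ = α_k⁰ for i ∈ 𝒢_k and max_i ‖β_i − β_i⁰‖ ≤ ε, and let α_k = |𝒢_k|⁻¹ Σ_{i ∈ 𝒢_k} β_i be the group averages. If b − 2ε > γλ, then ‖α_k − α_{k'}‖ > γλ for all k ≠ k', and consequently the grouped penalty Σ_{1 ≤ k < k' ≤ K} |𝒢_k| |𝒢_{k'}| p_γ(‖α_k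 − α_{k'}‖, λ) equals the constant (λ²(γ + 1)/2) Σ_{1 ≤ k < k' ≤ K} |𝒢_k| |𝒢_{k'}|, independent of β. -/
open Finset

lemma scad_const (γ lam t : ℝ) (hγ : 1 < γ) (hlam : 0 < lam)
    (ht : γ * lam ≤ |t|) :
    scadPenalty γ lam t = lam ^ 2 * (γ + 1) / 2 := by
  have hγ0 : (0:ℝ) < γ - 1 := by linarith
  set f : ℝ → ℝ := fun x => min 1 (max (γ - x / lam) 0 / (γ - 1)) with hf
  have hcont : Continuous f := by
    apply Continuous.min continuous_const
    exact ((continuous_const.sub (continuous_id.div_const lam)).max continuous_const).div_const _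
  have hint : ∀ a b : ℝ, IntervalIntegrable f MeasureTheory.volume a b :=
    fun a b => hcont.intervalIntegrable a b
  have hlamγ : lam ≤ γ * lam := by nlinarith
  have h1 : ∫ x in (0:ℝ)..lam, f x = lam := by
    rw [intervalIntegral.integral_congr (g := fun _ => (1:ℝ)) ?_]
    · simp
    · intro x hx
      rw [Set.uIcc_of_le hlam.le] at hx
      have hx1 : x / lam ≤ 1 := (div_le_one hlam).2 hx.2
      have h2 : γ - 1 ≤ γ - x / lam := by linarith
      have h3 : max (γ - x / lam) 0 = γ - x / lam := max_eq_left (by linarith)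
      simp only [hf, h3]
      rw [min_eq_left]
      exact (le_div_iff₀ hγ0).2 (by linarith)
  have h2 : ∫ x in lam..(γ*lam), f x = lam * (γ - 1) / 2 := by
    rw [intervalIntegral.integral_congr (g := fun x => (γ - x / lam) / (γ - 1)) ?_]
    · rw [intervalIntegral.integral_div]
      rw [intervalIntegral.integral_sub (intervalIntegrable_const)
        ((continuous_id'.div_const lam).intervalIntegrable _ _)]
      rw [intervalIntegral.integral_const, intervalIntegral.integral_div,
        integral_id]
      field_simp
      ring
    · intro x hx
      rw [Set.uIcc_of_le hlamγ] at hx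
      have hx1 : x / lam ≤ γ := (div_le_iff₀ hlam).2 (by linarith [hx.2])
      have hx2 : 1 ≤ x / lam := (le_div_iff₀ hlam).2 (by linarith [hx.1])
      have h3 : max (γ - x / lam) 0 = γ - x / lam := max_eq_left (by linarith)
      simp only [hf, h3]
      rw [min_eq_right]
      exact (div_le_one hγ0).2 (by linarith)
  have h3 : ∫ x in (γ*lam)..|t|, f x = 0 := by
    rw [intervalIntegral.integral_congr (g := fun _ => (0:ℝ)) ?_]
    · simp
    · intro x hx
      rw [Set.uIcc_of_le ht] at hx
      have hx2 : γ ≤ x / lam := (le_div_iff₀ hlam).2 (by linarith [hx.1])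
      have h3 : max (γ - x / lam) 0 = 0 := max_eq_right (by linarith)
      simp only [hf, h3]
      simp
  have hsplit : ∫ x in (0:ℝ)..|t|, f x = lam * (γ + 1) / 2 := by
    rw [← intervalIntegral.integral_add_adjacent_intervals (b := γ*lam) (hint _ _) (hint _ _),
      ← intervalIntegral.integral_add_adjacent_intervals (a := 0) (b := lam) (hint _ _) (hint _ _),
      h1, h2, h3]
    ring
  rw [scadPenalty, hsplit]; ring

/-- If the true group centers `α0` are `b`-separated, `β` is within `ε` of
the groupwise-constant truth, and `b − 2ε > γλ`, then the groupwise averages `α k` of `β`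
are more than `γλ` apart, and hence the grouped SCAD penalty
`∑_{k < k'} |𝒢_k||𝒢_{k'}| p_γ(‖α_k − α_{k'}‖, λ)` equals the constant
`(λ²(γ+1)/2) ∑_{k < k'} |𝒢_k||𝒢_{k'}|`, independent of `β`. -/
theorem grouped_scad_penalty_constant
    (m p K : ℕ) (hm : 1 ≤ m) (hp : 1 ≤ p) (hK : 2 ≤ K)
    (grp : Fin m → Fin K) (hsurj : Function.Surjective grp)
    (γ lam : ℝ) (hγ : 1 < γ) (hlam : 0 < lam)
    (b ε : ℝ)
    (α0 : Fin K → EuclideanSpace ℝ (Fin p))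
    (hsep : ∀ k k' : Fin K, k ≠ k' → b ≤ ‖α0 k - α0 k'‖)
    (β β0 : Fin m → EuclideanSpace ℝ (Fin p))
    (hβ0 : ∀ i, β0 i = α0 (grp i))
    (hclose : ∀ i, ‖β i - β0 i‖ ≤ ε)
    (α : Fin K → EuclideanSpace ℝ (Fin p))
    (hα : ∀ k, α k = (((univ.filter (fun i => grp i = k)).card : ℝ))⁻¹ •
      ∑ i ∈ univ.filter (fun i => grp i = k), β i)
    (hgap : γ * lam < b - 2 * ε) :
    (∀ k k' : Fin K, k ≠ k' → γ * lam < ‖α k - α k'‖) ∧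
    (∑ kk' ∈ univ.filter (fun kk' : Fin K × Fin K => kk'.1 < kk'.2),
        ((univ.filter (fun i => grp i = kk'.1)).card : ℝ) *
          ((univ.filter (fun i => grp i = kk'.2)).card : ℝ) *
            scadPenalty γ lam ‖α kk'.1 - α kk'.2‖)
      = (lam ^ 2 * (γ + 1) / 2) *
          ∑ kk' ∈ univ.filter (fun kk' : Fin K × Fin K => kk'.1 < kk'.2),
            ((univ.filter (fun i => grp i = kk'.1)).card : ℝ) *
              ((univ.filter (fun i => grp i = kk'.2)).card : ℝ) := by
  have hak : ∀ k, ‖α k - α0 k‖ ≤ ε := by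
    intro k
    set S := univ.filter (fun i => grp i = k) with hS
    obtain ⟨i0, hi0⟩ := hsurj k
    have hne : S.Nonempty := ⟨i0, by simp [hS, hi0]⟩
    have hcard : (0:ℝ) < S.card := by exact_mod_cast Finset.card_pos.2 hne
    have key : α k - α0 k = ((S.card : ℝ))⁻¹ • ∑ i ∈ S, (β i - α0 k) := by
      rw [Finset.sum_sub_distrib, Finset.sum_const, smul_sub, hα]
      congr 1
      rw [← Nat.cast_smul_eq_nsmul ℝ, smul_smul, inv_mul_cancel₀ hcard.ne', one_smul]
    rw [key, norm_smul, norm_inv, Real.norm_natCast]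
    have hsum : ‖∑ i ∈ S, (β i - α0 k)‖ ≤ (S.card : ℝ) * ε := by
      calc ‖∑ i ∈ S, (β i - α0 k)‖ ≤ ∑ i ∈ S, ‖β i - α0 k‖ := norm_sum_le _ _
        _ ≤ ∑ i ∈ S, ε := by
            apply Finset.sum_le_sum
            intro i hi
            have : grp i = k := by simpa [hS] using hi
            rw [← this, ← hβ0]; exact hclose i
        _ = (S.card : ℝ) * ε := by rw [Finset.sum_const, nsmul_eq_mul]
    calc (S.card : ℝ)⁻¹ * ‖∑ i ∈ S, (β i - α0 k)‖
        ≤ (S.card : ℝ)⁻¹ * ((S.card : ℝ) * ε) := by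
          apply mul_le_mul_of_nonneg_left hsum (by positivity)
      _ = ε := by field_simp
  have hmain : ∀ k k' : Fin K, k ≠ k' → γ * lam < ‖α k - α k'‖ := by
    intro k k' hkk'
    have h1 := hak k
    have h2 := hak k'
    have h3 := hsep k k' hkk'
    have htri : ‖α0 k - α0 k'‖ ≤ ‖α0 k - α k‖ + ‖α k - α k'‖ + ‖α k' - α0 k'‖ := by
      have := norm_sub_le_norm_sub_add_norm_sub (α0 k) (α k) (α0 k')
      have h4 := norm_sub_le_norm_sub_add_norm_sub (α k) (α k') (α0 k')
      linarith
    have e1 : ‖α0 k - α k‖ = ‖α k - α0 k‖ := norm_sub_rev _ _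
    have e2 : ‖α0 k' - α0 k‖ = ‖α0 k - α0 k'‖ := norm_sub_rev _ _
    linarith
  refine ⟨hmain, ?_⟩
  rw [Finset.mul_sum]
  apply Finset.sum_congr rfl
  intro kk' hkk'
  have hlt : kk'.1 < kk'.2 := by simpa using hkk'
  have := hmain kk'.1 kk'.2 hlt.ne
  rw [scad_const γ lam _ hγ hlam (by rw [abs_of_nonneg (norm_nonneg _)]; linarith)]
  ring
end
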